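/- Suppose α₀, …, α_l and β are ordinals with l ≥ 1, b ≤ l, and β + ω ≤ α_b. Then 2^{α₀} ⊕ ⋯ ⊕ 2^{α_l} ⊕ 2^{α_l} > (2^{α₀} ⊕ ⋯ ⊕ 2^{α_{b-1}} ⊕ 2^{β} ⊕ 2^{β}) + ω, where ⊕ is the natural sum of ordinals, exponentiations are ordinal base-2 exponentiations, and the final + is ordinal addition. -/

import Mathlib

universe u

/-! Mathlib no longer contains `NatOrdinal` and the natural sum `♯`
(`Mathlib/SetTheory/Ordinal/NaturalOps.lean` was removed); they are restored here
with their old definitions. -/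

/-- A type synonym for ordinals with natural addition. -/
def NatOrdinal : Type (u + 1) := Ordinal.{u}

instance NatOrdinal.instZero : Zero NatOrdinal.{u} := ⟨(0 : Ordinal.{u})⟩

noncomputable instance NatOrdinal.linearOrder : LinearOrder NatOrdinal.{u} := inferInstanceAs (LinearOrder Ordinal.{u})

/-- The identity function between `Ordinal` and `NatOrdinal`. -/
noncomputable def Ordinal.toNatOrdinal : Ordinal.{u} ≃o NatOrdinal.{u} := OrderIso.refl _

/-- The identity function between `NatOrdinal` and `Ordinal`. -/
noncomputable def NatOrdinal.toOrdinal : NatOrdinal.{u} ≃o Ordinal.{u} := OrderIso.refl _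

namespace Ordinal

/-- Natural addition on ordinals (Hessenberg sum). -/
noncomputable def nadd : Ordinal.{u} → Ordinal.{u} → Ordinal.{u}
  | a, b => max (blsub.{u, u} a fun a' _ => nadd a' b) (blsub.{u, u} b fun b' _ => nadd a b')
termination_by a b => (a, b)
decreasing_by
  all_goals first
    | exact Prod.Lex.left _ _ (by assumption)
    | exact Prod.Lex.right _ (by assumption)

theorem nadd_le_iff' {a b c : Ordinal.{u}} :
    nadd b c ≤ a ↔ (∀ b' < b, nadd b' c < a) ∧ ∀ c' < c, nadd b c' < a := by
  rw [nadd.eq_1, max_le_iff, blsub_le_iff, blsub_le_iff]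

theorem lt_nadd_iff' {a b c : Ordinal.{u}} :
    a < nadd b c ↔ (∃ b' < b, a ≤ nadd b' c) ∨ ∃ c' < c, a ≤ nadd b c' := by
  rw [nadd.eq_1, lt_max_iff, lt_blsub_iff, lt_blsub_iff]
  simp only [exists_prop]

theorem nadd_lt_nadd_left' {b c : Ordinal.{u}} (h : b < c) (a : Ordinal.{u}) :
    nadd a b < nadd a c :=
  lt_nadd_iff'.2 (Or.inr ⟨b, h, le_rfl⟩)

theorem nadd_lt_nadd_right' {b c : Ordinal.{u}} (h : b < c) (a : Ordinal.{u}) :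
    nadd b a < nadd c a :=
  lt_nadd_iff'.2 (Or.inl ⟨b, h, le_rfl⟩)

theorem nadd_le_nadd_left' {b c : Ordinal.{u}} (h : b ≤ c) (a : Ordinal.{u}) :
    nadd a b ≤ nadd a c := by
  rcases lt_or_eq_of_le h with h | rfl
  · exact (nadd_lt_nadd_left' h a).le
  · exact le_rfl

theorem nadd_le_nadd_right' {b c : Ordinal.{u}} (h : b ≤ c) (a : Ordinal.{u}) :
    nadd b a ≤ nadd c a := by
  rcases lt_or_eq_of_le h with h | rfl
  · exact (nadd_lt_nadd_right' h a).le
  · exact le_rfl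

theorem nadd_comm' : ∀ a b : Ordinal.{u}, nadd a b = nadd b a := by
  intro a
  induction a using Ordinal.induction with | _ a iha => ?_
  intro b
  induction b using Ordinal.induction with | _ b ihb => ?_
  apply le_antisymm
  · refine nadd_le_iff'.2 ⟨fun a' ha => ?_, fun b' hb => ?_⟩
    · rw [iha a' ha b]; exact nadd_lt_nadd_left' ha b
    · rw [ihb b' hb]; exact nadd_lt_nadd_right' hb a
  · refine nadd_le_iff'.2 ⟨fun b' hb => ?_, fun a' ha => ?_⟩
    · rw [← ihb b' hb]; exact nadd_lt_nadd_left' hb a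
    · rw [← iha a' ha b]; exact nadd_lt_nadd_right' ha b

theorem nadd_zero' : ∀ a : Ordinal.{u}, nadd a 0 = a := by
  intro a
  induction a using Ordinal.induction with | _ a iha => ?_
  apply le_antisymm
  · refine nadd_le_iff'.2 ⟨fun a' ha => ?_, fun c hc => absurd hc (by simp)⟩
    rw [iha a' ha]; exact ha
  · refine le_of_forall_lt (fun x hx => ?_)
    rw [← iha x hx]; exact nadd_lt_nadd_right' hx 0

theorem zero_nadd' (a : Ordinal.{u}) : nadd 0 a = a := by
  rw [nadd_comm', nadd_zero']

theorem nadd_assoc' : ∀ a b c : Ordinal.{u}, nadd (nadd a b) c = nadd a (nadd b c) := by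
  intro a
  induction a using Ordinal.induction with | _ a iha => ?_
  intro b
  induction b using Ordinal.induction with | _ b ihb => ?_
  intro c
  induction c using Ordinal.induction with | _ c ihc => ?_
  apply le_antisymm
  · refine nadd_le_iff'.2 ⟨fun d hd => ?_, fun c' hc => ?_⟩
    · rcases lt_nadd_iff'.1 hd with ⟨a', ha, hd'⟩ | ⟨b', hb, hd'⟩
      · calc nadd d c ≤ nadd (nadd a' b) c := nadd_le_nadd_right' hd' c
          _ = nadd a' (nadd b c) := iha a' ha b c
          _ < nadd a (nadd b c) := nadd_lt_nadd_right' ha _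
      · calc nadd d c ≤ nadd (nadd a b') c := nadd_le_nadd_right' hd' c
          _ = nadd a (nadd b' c) := ihb b' hb c
          _ < nadd a (nadd b c) := nadd_lt_nadd_left' (nadd_lt_nadd_right' hb c) a
    · rw [ihc c' hc]
      exact nadd_lt_nadd_left' (nadd_lt_nadd_left' hc b) a
  · refine nadd_le_iff'.2 ⟨fun a' ha => ?_, fun e he => ?_⟩
    · rw [← iha a' ha b c]
      exact nadd_lt_nadd_right' (nadd_lt_nadd_right' ha b) c
    · rcases lt_nadd_iff'.1 he with ⟨b', hb, he'⟩ | ⟨c', hc, he'⟩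
      · calc nadd a e ≤ nadd a (nadd b' c) := nadd_le_nadd_left' he' a
          _ = nadd (nadd a b') c := (ihb b' hb c).symm
          _ < nadd (nadd a b) c := nadd_lt_nadd_right' (nadd_lt_nadd_left' hb a) c
      · calc nadd a e ≤ nadd a (nadd b c') := nadd_le_nadd_left' he' a
          _ = nadd (nadd a b) c' := (ihc c' hc).symm
          _ < nadd (nadd a b) c := nadd_lt_nadd_left' hc _

end Ordinal

namespace NaturalOps

/-- Natural addition on ordinals. -/
infixl:65 " ♯ " => Ordinal.nadd

end NaturalOps

noncomputable instance NatOrdinal.instAdd : Add NatOrdinal.{u} := ⟨Ordinal.nadd⟩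

noncomputable instance NatOrdinal.instAddCommMonoid : AddCommMonoid NatOrdinal.{u} where
  add_assoc a b c := Ordinal.nadd_assoc' a b c
  zero_add a := Ordinal.zero_nadd' a
  add_zero a := Ordinal.nadd_zero' a
  add_comm a b := Ordinal.nadd_comm' a b
  nsmul := nsmulRec

open Ordinal
open scoped NaturalOps

/-- The natural (Hessenberg) sum of a finite family of ordinals. -/
noncomputable def natSum {ι : Type*} (s : Finset ι) (f : ι → Ordinal) : Ordinal :=
  NatOrdinal.toOrdinal (∑ i ∈ s, Ordinal.toNatOrdinal (f i))

namespace Ordinal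

theorem nadd_le_iff {a b c : Ordinal.{u}} :
    b ♯ c ≤ a ↔ (∀ b' < b, b' ♯ c < a) ∧ ∀ c' < c, b ♯ c' < a := nadd_le_iff'

theorem nadd_comm (a b : Ordinal.{u}) : a ♯ b = b ♯ a := nadd_comm' a b

theorem nadd_zero (a : Ordinal.{u}) : a ♯ 0 = a := nadd_zero' a

theorem nadd_assoc (a b c : Ordinal.{u}) : a ♯ b ♯ c = a ♯ (b ♯ c) := nadd_assoc' a b c

theorem nadd_lt_nadd_left {b c : Ordinal.{u}} (h : b < c) (a : Ordinal.{u}) : a ♯ b < a ♯ c :=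
  nadd_lt_nadd_left' h a

theorem nadd_lt_nadd_right {b c : Ordinal.{u}} (h : b < c) (a : Ordinal.{u}) : b ♯ a < c ♯ a :=
  nadd_lt_nadd_right' h a

theorem nadd_le_nadd_left {b c : Ordinal.{u}} (h : b ≤ c) (a : Ordinal.{u}) : a ♯ b ≤ a ♯ c :=
  nadd_le_nadd_left' h a

theorem nadd_le_nadd_right {b c : Ordinal.{u}} (h : b ≤ c) (a : Ordinal.{u}) : b ♯ a ≤ c ♯ a :=
  nadd_le_nadd_right' h a

theorem le_self_nadd {a b : Ordinal.{u}} : a ≤ a ♯ b := by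
  have h := nadd_le_nadd_left' (by simp : (0:Ordinal.{u}) ≤ b) a
  rwa [nadd_zero'] at h

theorem le_nadd_self {a b : Ordinal.{u}} : a ≤ b ♯ a := by
  rw [nadd_comm']; exact le_self_nadd

theorem nadd_eq_add (a b : Ordinal.{u}) :
    a ♯ b = NatOrdinal.toOrdinal (Ordinal.toNatOrdinal a + Ordinal.toNatOrdinal b) := rfl

theorem nadd_succ : ∀ a b : Ordinal.{u}, a ♯ Order.succ b = Order.succ (a ♯ b) := by
  intro a
  induction a using Ordinal.induction with | _ a iha => ?_
  intro b
  apply le_antisymm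
  · refine nadd_le_iff'.2 ⟨fun a' ha => ?_, fun c' hc => ?_⟩
    · rw [iha a' ha b]
      exact Order.succ_lt_succ (nadd_lt_nadd_right' ha b)
    · exact Order.lt_succ_iff.2 (nadd_le_nadd_left' (Order.lt_succ_iff.1 hc) a)
  · exact Order.succ_le_of_lt (nadd_lt_nadd_left' (Order.lt_succ b) a)

end Ordinal

private theorem nadd_lite (q : Ordinal) (j k : ℕ)
    (habs : ∀ j' k' : ℕ, j' + k' < j + k → ∀ b a : Ordinal, b < ω ^ q * k' →
      (ω ^ q * j' + a) ♯ b ≤ ω ^ q * j' + (a ♯ b))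
    (hclo : ∀ a b : Ordinal, a < ω ^ q → b < ω ^ q → a ♯ b < ω ^ q)
    (x y : Ordinal) (hx : x < ω ^ q * j) (hy : y < ω ^ q * k) :
    x ♯ y < ω ^ q * j + y := by
  have hq : (0:Ordinal) < ω ^ q := opow_pos q omega0_pos
  have hj0 : j ≠ 0 := by
    rintro rfl
    rw [Nat.cast_zero, mul_zero] at hx
    exact absurd hx (by simp)
  -- decompose x
  have hdx : x / ω ^ q < (j : Ordinal) := (Ordinal.div_lt hq.ne').2 hx
  obtain ⟨i, hi⟩ := lt_omega0.1 (hdx.trans (nat_lt_omega0 j))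
  have hij : i < j := by exact_mod_cast hi ▸ hdx
  have hxd : ω ^ q * i + x % ω ^ q = x := by rw [← hi]; exact Ordinal.div_add_mod x (ω ^ q)
  have hs : x % ω ^ q < ω ^ q := Ordinal.mod_lt x hq.ne'
  -- decompose y
  have hdy : y / ω ^ q < (k : Ordinal) := (Ordinal.div_lt hq.ne').2 hy
  obtain ⟨e, he⟩ := lt_omega0.1 (hdy.trans (nat_lt_omega0 k))
  have hek : e < k := by exact_mod_cast he ▸ hdy
  have hyd : ω ^ q * e + y % ω ^ q = y := by rw [← he]; exact Ordinal.div_add_mod y (ω ^ q)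
  have hrr : y % ω ^ q < ω ^ q := Ordinal.mod_lt y hq.ne'
  -- bound (x % ω^q) ♯ y < ω^q + y
  have hsb : (x % ω ^ q) ♯ y < ω ^ q + y := by
    have h1 : (x % ω ^ q) ♯ y ≤ ω ^ q * e + (y % ω ^ q ♯ x % ω ^ q) := by
      have h1' := habs e 1 (by omega) (x % ω ^ q) (y % ω ^ q) (by simpa using hs)
      rw [hyd] at h1'
      exact (nadd_comm _ _).trans_le h1'
    have h2 : ω ^ q * e + (y % ω ^ q ♯ x % ω ^ q) < ω ^ q * e + ω ^ q :=
      add_lt_add_right (hclo _ _ hrr hs) _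
    have h3 : ω ^ q * (e : Ordinal) + ω ^ q = ω ^ q + ω ^ q * e := by
      rw [← mul_add_one]
      have : ((e : Ordinal) + 1) = (1 + e : Ordinal) := by norm_cast; omega
      rw [this, mul_add, mul_one]
    have h4 : ω ^ q + ω ^ q * (e : Ordinal) ≤ ω ^ q + y := by
      refine add_le_add_right ?_ _
      rw [← hyd]; exact le_self_add
    exact h1.trans_lt (h2.trans_le (h3 ▸ h4))
  calc x ♯ y = (ω ^ q * i + x % ω ^ q) ♯ y := by rw [hxd]
    _ ≤ ω ^ q * i + (x % ω ^ q ♯ y) := habs i k (by omega) _ _ hy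
    _ < ω ^ q * i + (ω ^ q + y) := add_lt_add_right hsb _
    _ = ω ^ q * ((i : Ordinal) + 1) + y := by rw [mul_add_one, add_assoc]
    _ ≤ ω ^ q * j + y := by
        refine add_le_add_left (mul_le_mul_right ?_ _) _
        exact_mod_cast Nat.succ_le_of_lt hij

private theorem nadd_closure_absorb : ∀ q : Ordinal,
    (∀ a b : Ordinal, a < ω ^ q → b < ω ^ q → a ♯ b < ω ^ q) ∧
    (∀ j k : ℕ, ∀ b a : Ordinal, b < ω ^ q * k →
      (ω ^ q * j + a) ♯ b ≤ ω ^ q * j + (a ♯ b)) := by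
  intro q
  induction q using Ordinal.induction with
  | _ q IH =>
  have hclo : ∀ a b : Ordinal, a < ω ^ q → b < ω ^ q → a ♯ b < ω ^ q := by
    intro a b ha hb
    rcases eq_or_ne q 0 with rfl | hq0
    · rw [opow_zero, Ordinal.lt_one_iff_zero] at ha hb ⊢
      rw [ha, hb, nadd_zero]
    · obtain ⟨c, hc, m, ham⟩ := (lt_omega0_opow hq0).1 ha
      obtain ⟨c', hc', m', hbm⟩ := (lt_omega0_opow hq0).1 hb
      set d := max c c' with hd_def
      have hd : d < q := max_lt hc hc'
      have ham' : a < ω ^ d * m :=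
        ham.trans_le (mul_le_mul_left (opow_le_opow_right omega0_pos (le_max_left _ _)) _)
      have hbm' : b < ω ^ d * m' :=
        hbm.trans_le (mul_le_mul_left (opow_le_opow_right omega0_pos (le_max_right _ _)) _)
      have hlite := nadd_lite d m m' (fun j' k' _ => (IH d hd).2 j' k') (IH d hd).1 a b ham' hbm'
      have h1 : a ♯ b < ω ^ d * ((m + m' : ℕ) : Ordinal) := by
        push_cast
        rw [mul_add]
        exact hlite.trans (add_lt_add_right hbm' _)
      calc a ♯ b < ω ^ d * ((m + m' : ℕ) : Ordinal) := h1
        _ < ω ^ d * ω := mul_lt_mul_of_pos_left (nat_lt_omega0 _) (opow_pos d omega0_pos)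
        _ = ω ^ Order.succ d := (opow_succ ω d).symm
        _ ≤ ω ^ q := opow_le_opow_right omega0_pos (Order.succ_le_of_lt hd)
  refine ⟨hclo, ?_⟩
  suffices H : ∀ n : ℕ, ∀ j k : ℕ, j + k ≤ n → ∀ b a : Ordinal, b < ω ^ q * k →
      (ω ^ q * j + a) ♯ b ≤ ω ^ q * j + (a ♯ b) by
    intro j k
    exact H (j + k) j k le_rfl
  intro n
  induction n with
  | zero =>
    intro j k hjk b a hb
    obtain rfl : k = 0 := by omega
    rw [Nat.cast_zero, mul_zero] at hb
    exact absurd hb (by simp)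
  | succ n IHn =>
    intro j k hjk b
    induction b using Ordinal.induction with
    | _ b IHb =>
    intro a
    induction a using Ordinal.induction with
    | _ a IHa =>
    intro hb
    have hk0 : k ≠ 0 := by
      rintro rfl
      rw [Nat.cast_zero, mul_zero] at hb
      exact absurd hb (by simp)
    refine nadd_le_iff.2 ⟨fun x hx => ?_, fun b' hb' => ?_⟩
    · rcases lt_or_ge x (ω ^ q * j) with hxj | hxj
      · have hlite := nadd_lite q j k (fun j' k' h' => IHn j' k' (by omega)) hclo x b hxj hb
        exact hlite.trans_le (add_le_add_right le_nadd_self _)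
      · obtain ⟨x', rfl⟩ : ∃ x', x = ω ^ q * j + x' :=
          ⟨x - ω ^ q * j, (Ordinal.add_sub_cancel_of_le hxj).symm⟩
        have hx' : x' < a := by rwa [add_lt_add_iff_left] at hx
        calc (ω ^ q * j + x') ♯ b ≤ ω ^ q * j + (x' ♯ b) := IHa x' hx' hb
          _ < ω ^ q * j + (a ♯ b) := add_lt_add_right (nadd_lt_nadd_right hx' b) _
    · calc (ω ^ q * j + a) ♯ b' ≤ ω ^ q * j + (a ♯ b') := IHb b' hb' a (hb'.trans hb)
        _ < ω ^ q * j + (a ♯ b) := add_lt_add_right (nadd_lt_nadd_left hb' a) _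

private theorem nadd_add_le (a b c : Ordinal) : (a ♯ b) + c ≤ a ♯ (b + c) := by
  induction c using Ordinal.limitRecOn with
  | zero => simp
  | add_one c IH =>
    rw [← Order.succ_eq_add_one, add_succ, add_succ, nadd_succ]
    exact Order.succ_le_succ IH
  | limit c hc IH =>
    refine (add_le_iff_of_isSuccLimit hc).2 fun c' hc' => ?_
    exact (IH c' hc').trans (nadd_le_nadd_left (add_le_add_right hc'.le b) a)

private theorem key_bound {β γ : Ordinal} (h : β + ω ≤ γ) :
    ((2:Ordinal) ^ β ♯ (2:Ordinal) ^ β) + ω ≤ (2:Ordinal) ^ γ := by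
  have h12 : (1:Ordinal) < 2 := by exact_mod_cast Nat.one_lt_two
  have h02 : (0:Ordinal) < 2 := zero_lt_one.trans h12
  have h2ω : (2:Ordinal) < ω := by exact_mod_cast nat_lt_omega0 2
  have hr : β % ω < ω := Ordinal.mod_lt β omega0_ne_zero
  have hβd : ω * (β / ω) + β % ω = β := Ordinal.div_add_mod β ω
  have hsum : β + ω = ω * (β / ω + 1) := by
    conv_lhs => rw [← hβd]
    rw [add_assoc, add_omega0 hr, mul_add_one]
  have h2 : (2:Ordinal) ^ (β + ω) = ω ^ (β / ω + 1) := by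
    rw [hsum, opow_mul, opow_omega0 h12 h2ω]
  have h3 : (2:Ordinal) ^ β < ω ^ (β / ω + 1) := by
    rw [← h2]
    exact (opow_lt_opow_iff_right h12).2 (lt_add_of_pos_right β omega0_pos)
  have h4 : (2:Ordinal) ^ β ♯ (2:Ordinal) ^ β < ω ^ (β / ω + 1) :=
    (nadd_closure_absorb (β / ω + 1)).1 _ _ h3 h3
  have h5 : ω ≤ ω ^ (β / ω + 1) := by
    conv_lhs => rw [← opow_one ω]
    exact opow_le_opow_right omega0_pos le_add_self
  calc ((2:Ordinal) ^ β ♯ (2:Ordinal) ^ β) + ω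
      ≤ ((2:Ordinal) ^ β ♯ (2:Ordinal) ^ β) + ω ^ (β / ω + 1) := add_le_add_right h5 _
    _ = ω ^ (β / ω + 1) := Ordinal.add_absorp h4 le_rfl
    _ = (2:Ordinal) ^ (β + ω) := h2.symm
    _ ≤ (2:Ordinal) ^ γ := opow_le_opow_right h02 h

private theorem natSum_range_succ (f : ℕ → Ordinal) (n : ℕ) :
    natSum (Finset.range (n + 1)) f = natSum (Finset.range n) f ♯ f n := by
  rw [natSum, natSum, Finset.sum_range_succ, nadd_eq_add]
  rfl

private theorem natSum_range_mono (f : ℕ → Ordinal) {m n : ℕ} (h : m ≤ n) :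
    natSum (Finset.range m) f ≤ natSum (Finset.range n) f := by
  induction h with
  | refl => exact le_rfl
  | @step k _ ih =>
    exact ih.trans (by rw [natSum_range_succ]; exact le_self_nadd)

theorem measure_decrease_backtrack (l b : ℕ) (hl : 1 ≤ l) (hb : b ≤ l)
    (α : ℕ → Ordinal) (β : Ordinal) (hβ : β + ω ≤ α b) :
    (natSum (Finset.range (l + 1)) (fun i => (2 : Ordinal) ^ α i)) ♯ (2 : Ordinal) ^ α l >
      ((natSum (Finset.range b) (fun i => (2 : Ordinal) ^ α i)) ♯
          (2 : Ordinal) ^ β ♯ (2 : Ordinal) ^ β) + ω := by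
  set f : ℕ → Ordinal := fun i => (2 : Ordinal) ^ α i with hf
  have h02 : (0:Ordinal) < 2 := by
    have : (1:Ordinal) < 2 := by exact_mod_cast Nat.one_lt_two
    exact zero_lt_one.trans this
  calc (natSum (Finset.range b) f ♯ (2:Ordinal) ^ β ♯ (2:Ordinal) ^ β) + ω
      = (natSum (Finset.range b) f ♯ ((2:Ordinal) ^ β ♯ (2:Ordinal) ^ β)) + ω := by
        rw [nadd_assoc]
    _ ≤ natSum (Finset.range b) f ♯ (((2:Ordinal) ^ β ♯ (2:Ordinal) ^ β) + ω) :=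
        nadd_add_le _ _ _
    _ ≤ natSum (Finset.range b) f ♯ (2:Ordinal) ^ α b := nadd_le_nadd_left (key_bound hβ) _
    _ = natSum (Finset.range (b + 1)) f := (natSum_range_succ f b).symm
    _ < natSum (Finset.range (b + 1)) f ♯ (2:Ordinal) ^ α l := by
        conv_lhs => rw [← nadd_zero (natSum (Finset.range (b + 1)) f)]
        exact nadd_lt_nadd_left (opow_pos _ h02) _
    _ ≤ natSum (Finset.range (l + 1)) f ♯ (2:Ordinal) ^ α l :=
        nadd_le_nadd_right (natSum_range_mono f (by omega)) _
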